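/- Let ℏ₀ > 0, s, s' > 0 and let c = (c_k), c' = (c'_k) be square-summable sequences of complex numbers indexed by ℤ. Then the function (x,y) ↦ conj(Φ_s[c](x,y)) · Φ_{s'}[c'](x,y) · e^{−(s+s')y²/(2ℏ₀)} is integrable on (ℝ/2πℤ) × ℝ with respect to (dx/2π)·dy, and √((s+s')/2) · ∫_ℝ ∫_0^{2π} conj(Φ_s[c](x,y)) · Φ_{s'}[c'](x,y) · e^{−(s+s')y²/(2ℏ₀)} (dx/2π) dy = √(πℏ₀) · Σ_{k∈ℤ} conj(c_k)·c'_k. (This is Theorem 3.5, ⟨σ_s, σ'_{s'}⟩^{BKS} = a_{(s+s')/2}·⟨f, f'⟩_{L²(K)}, in the abelian case K = U(1), where a_t = (πℏ₀)^{1/2} since ρ = 0.) -/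

import Mathlib

open scoped Real BigOperators
open MeasureTheory

/-- The `J_s`-holomorphic function `(C_{sℏ₀}f) ∘ ψ_s` on `T*U(1) ≅ (ℝ/2πℤ) × ℝ`,
where `f ∈ L²(S¹)` has Fourier coefficients `c_k`:
`Φ_s[c](x,y) = Σ_{k∈ℤ} c_k e^{−sℏ₀k²/2} e^{ikx} e^{−ksy}`. -/
noncomputable def Phi (ℏ₀ s : ℝ) (c : ℤ → ℂ) (x y : ℝ) : ℂ :=
  ∑' k : ℤ, c k * Complex.exp (-((s : ℂ) * (ℏ₀ : ℂ) * (k : ℂ) ^ 2) / 2) *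
    Complex.exp ((k : ℂ) * Complex.I * (x : ℂ)) * Complex.exp (-((k : ℂ) * (s : ℂ) * (y : ℂ)))

/- ### Auxiliary summability lemmas -/

lemma summable_exp_int (A B : ℝ) (hA : 0 < A) :
    Summable fun n : ℤ => Real.exp (-(A * (n:ℝ)^2) + B * n) := by
  have h := summable_pow_mul_jacobiTheta₂_term_bound (|B|/(2*π)) (show 0 < A/π by positivity) 0
  simp only [pow_zero, one_mul] at h
  refine Summable.of_nonneg_of_le (fun n => (Real.exp_pos _).le) (fun n => ?_) h
  have h1 : -π * (A/π * (n:ℝ)^2 - 2 * (|B|/(2*π)) * |(n:ℝ)|) = -(A*(n:ℝ)^2) + |B| * |(n:ℝ)| := by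
    field_simp
    ring
  have h2 : B * (n:ℝ) ≤ |B| * |(n:ℝ)| := by
    calc B * n ≤ |B * n| := le_abs_self _
    _ = |B| * |(n:ℝ)| := abs_mul _ _
  rw [show ((|n| : ℤ) : ℝ) = |(n:ℝ)| by push_cast; rfl]
  rw [h1]
  exact Real.exp_le_exp.2 (by linarith)

lemma integrable_tsum_of_summable {ι : Type*} [Countable ι] {X : Type*} [MeasurableSpace X]
    {μ : Measure X} {f : ι → X → ℂ} (hf : ∀ i, Integrable (f i) μ)
    (hpt : ∀ x, Summable fun i => ‖f i x‖)
    (hsum : Summable fun i => ∫ x, ‖f i x‖ ∂μ) :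
    Integrable (fun x => ∑' i, f i x) μ := by
  have hnn : ∀ x, Summable fun i => ‖f i x‖₊ := by
    intro x
    rw [← NNReal.summable_coe]
    simpa [coe_nnnorm] using hpt x
  have hmeas : AEStronglyMeasurable (fun x => ∑' i, f i x) μ := by
    refine aestronglyMeasurable_of_tendsto_ae (Filter.atTop : Filter (Finset ι))
      (f := fun s x => ∑ i ∈ s, f i x) (fun s => s.aestronglyMeasurable_fun_sum fun i _ => (hf i).1) ?_
    exact Filter.Eventually.of_forall fun x => ((hpt x).of_norm).hasSum
  refine ⟨hmeas, ?_⟩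
  have hb : ∫⁻ x, ‖∑' i, f i x‖₊ ∂μ ≤ ∑' i, ∫⁻ x, ‖f i x‖₊ ∂μ := by
    rw [← lintegral_tsum (fun i => (hf i).1.aemeasurable.nnnorm.coe_nnreal_ennreal)]
    refine lintegral_mono fun x => ?_
    calc (‖∑' i, f i x‖₊ : ENNReal) ≤ ((∑' i, ‖f i x‖₊ : NNReal) : ENNReal) := by
          exact_mod_cast ENNReal.coe_le_coe.2 (nnnorm_tsum_le (hnn x))
    _ = ∑' i, (‖f i x‖₊ : ENNReal) := ENNReal.coe_tsum (hnn x)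
  have he : ∑' i, ∫⁻ x, ‖f i x‖₊ ∂μ = ENNReal.ofReal (∑' i, ∫ x, ‖f i x‖ ∂μ) := by
    rw [ENNReal.ofReal_tsum_of_nonneg (fun i => integral_nonneg fun x => norm_nonneg _) hsum]
    exact tsum_congr fun i => (ofReal_integral_norm_eq_lintegral_enorm (hf i)).symm
  rw [HasFiniteIntegral]
  exact lt_of_le_of_lt (hb.trans he.le) ENNReal.ofReal_lt_top

lemma summable_norm_mul {t ℏ₀ : ℝ} (ht : 0 < t) (hℏ : 0 < ℏ₀) (c : ℤ → ℂ)
    (hc : Summable fun k : ℤ => ‖c k‖^2) (y : ℝ) :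
    Summable fun k : ℤ => ‖c k‖ * Real.exp (-(t*ℏ₀*(k:ℝ)^2)/2 + -((k:ℝ)*t*y)) := by
  have hg : Summable fun k : ℤ =>
      Real.exp (-(t*ℏ₀*(k:ℝ)^2)/2 + -((k:ℝ)*t*y)) * Real.exp (-(t*ℏ₀*(k:ℝ)^2)/2 + -((k:ℝ)*t*y)) := by
    have h := summable_exp_int (t*ℏ₀) (-(2*t*y)) (by positivity)
    refine h.congr fun k => ?_
    rw [← Real.exp_add]
    congr 1
    ring
  refine Summable.of_nonneg_of_le (fun k => by positivity) (fun k => ?_) ((hc.add hg).div_const 2)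
  show _ ≤ (‖c k‖^2 + _)/2
  nlinarith [norm_nonneg (c k), Real.exp_pos (-(t*ℏ₀*(k:ℝ)^2)/2 + -((k:ℝ)*t*y)),
    sq_nonneg (‖c k‖ - Real.exp (-(t*ℏ₀*(k:ℝ)^2)/2 + -((k:ℝ)*t*y)))]

def shearEquiv : ℤ × ℤ ≃ ℤ × ℤ :=
  ⟨fun p => (p.1 + p.2, p.2), fun p => (p.1 - p.2, p.2), fun p => by simp, fun p => by simp⟩

def involEquiv : ℤ × ℤ ≃ ℤ × ℤ :=
  ⟨fun p => (p.1, p.1 - p.2), fun p => (p.1, p.1 - p.2), fun p => by simp, fun p => by simp⟩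

lemma summable_2d {w w' : ℤ → ℝ} (hw : Summable fun k => w k^2) (hw' : Summable fun k => w' k^2)
    (hw0 : ∀ k, 0 ≤ w k) (hw0' : ∀ k, 0 ≤ w' k) {α : ℝ} (hα : 0 < α) :
    Summable fun q : ℤ × ℤ => w q.1 * w' q.2 * Real.exp (-(α * ((q.1:ℝ) - (q.2:ℝ))^2)) := by
  set g : ℤ → ℝ := fun m => Real.exp (-(α * (m:ℝ)^2)) with hgdef
  have hgs : Summable g := by
    have := summable_exp_int α 0 hα
    simpa using this
  have hg0 : ∀ m, 0 ≤ g m := fun m => (Real.exp_pos _).le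
  have S1 : Summable fun q : ℤ×ℤ => w q.1^2 * g (q.1 - q.2) := by
    rw [← involEquiv.summable_iff]
    have : ((fun q : ℤ×ℤ => w q.1^2 * g (q.1 - q.2)) ∘ involEquiv)
        = fun p : ℤ×ℤ => w p.1^2 * g p.2 := by
      funext p
      simp [involEquiv, Function.comp]
    rw [this]
    exact hw.mul_of_nonneg hgs (fun k => sq_nonneg _) hg0
  have S2 : Summable fun q : ℤ×ℤ => w' q.2^2 * g (q.1 - q.2) := by
    rw [← shearEquiv.summable_iff]
    have : ((fun q : ℤ×ℤ => w' q.2^2 * g (q.1 - q.2)) ∘ shearEquiv)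
        = fun p : ℤ×ℤ => g p.1 * w' p.2^2 := by
      funext p
      simp [shearEquiv, Function.comp, mul_comm]
    rw [this]
    exact hgs.mul_of_nonneg hw' hg0 (fun k => sq_nonneg _)
  have key : ∀ q : ℤ×ℤ, Real.exp (-(α * ((q.1:ℝ) - (q.2:ℝ))^2)) = g (q.1 - q.2) := by
    intro q
    simp only [hgdef]
    congr 2
    push_cast
    ring
  refine Summable.of_nonneg_of_le
    (fun q => mul_nonneg (mul_nonneg (hw0 _) (hw0' _)) (Real.exp_pos _).le)
    (fun q => ?_) ((S1.add S2).div_const 2)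
  rw [key q]
  show _ ≤ (w q.1^2 * g (q.1 - q.2) + w' q.2^2 * g (q.1 - q.2))/2
  nlinarith [sq_nonneg (w q.1 - w' q.2), hg0 (q.1 - q.2), mul_nonneg (hw0 q.1) (hw0' q.2)]

/- ### The double-series terms -/

noncomputable def gA (ℏ₀ s s' : ℝ) (c c' : ℤ → ℂ) (q : ℤ × ℤ) : ℂ :=
  (starRingEnd ℂ) (c q.1) * c' q.2 *
    ((Real.exp (-(s*ℏ₀*(q.1:ℝ)^2 + s'*ℏ₀*(q.2:ℝ)^2)/2) : ℝ) : ℂ)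

noncomputable def gterm (ℏ₀ s s' : ℝ) (c c' : ℤ → ℂ) (q : ℤ × ℤ) (p : ℝ × ℝ) : ℂ :=
  gA ℏ₀ s s' c c' q * Complex.exp ((((q.2 - q.1 : ℤ) : ℝ) : ℂ) * Complex.I * (p.1 : ℂ)) *
    ((Real.exp (-((s+s')/(2*ℏ₀)) * p.2^2 + -((q.1:ℝ)*s + (q.2:ℝ)*s') * p.2) : ℝ) : ℂ)

lemma norm_cexp_I (r x : ℝ) : ‖Complex.exp ((r:ℂ) * Complex.I * (x:ℂ))‖ = 1 := by
  rw [Complex.norm_exp]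
  simp [Complex.mul_re]

lemma norm_cexp_ofReal (r : ℝ) : ‖Complex.exp ((r:ℝ):ℂ)‖ = Real.exp r := by
  rw [Complex.norm_exp, Complex.ofReal_re]

lemma norm_gA (ℏ₀ s s' : ℝ) (c c' : ℤ → ℂ) (q : ℤ × ℤ) :
    ‖gA ℏ₀ s s' c c' q‖ = ‖c q.1‖ * ‖c' q.2‖ *
      Real.exp (-(s*ℏ₀*(q.1:ℝ)^2 + s'*ℏ₀*(q.2:ℝ)^2)/2) := by
  rw [gA, norm_mul, norm_mul, RCLike.norm_conj]
  congr 1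
  rw [Complex.norm_real, Real.norm_eq_abs, abs_of_pos (Real.exp_pos _)]

lemma norm_gterm (ℏ₀ s s' : ℝ) (c c' : ℤ → ℂ) (q : ℤ × ℤ) (p : ℝ × ℝ) :
    ‖gterm ℏ₀ s s' c c' q p‖ = (‖c q.1‖ * ‖c' q.2‖ *
      Real.exp (-(s*ℏ₀*(q.1:ℝ)^2 + s'*ℏ₀*(q.2:ℝ)^2)/2)) *
      Real.exp (-((s+s')/(2*ℏ₀)) * p.2^2 + -((q.1:ℝ)*s + (q.2:ℝ)*s') * p.2) := by
  rw [gterm, norm_mul, norm_mul, norm_gA, norm_cexp_I]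
  rw [Complex.norm_real, Real.norm_eq_abs, abs_of_pos (Real.exp_pos _)]
  ring

/- ### One-dimensional integrals -/

lemma xint (m : ℤ) : ∫ x in Set.Ioc (0:ℝ) (2*π), Complex.exp (((m:ℝ):ℂ) * Complex.I * (x:ℂ))
    = if m = 0 then ((2*π:ℝ):ℂ) else 0 := by
  rw [← intervalIntegral.integral_of_le (by positivity : (0:ℝ) ≤ 2*π)]
  rcases eq_or_ne m 0 with h | h
  · rw [if_pos h, h]
    simp
  · rw [if_neg h]
    have h2 : ((m:ℝ):ℂ) * Complex.I ≠ 0 := by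
      refine mul_ne_zero ?_ Complex.I_ne_zero
      exact_mod_cast (Int.cast_ne_zero (α := ℝ)).2 h
    rw [integral_exp_mul_complex h2]
    have h3 : ((m:ℝ):ℂ) * Complex.I * ((2*π:ℝ):ℂ) = (m:ℂ) * (2*(π:ℂ)*Complex.I) := by
      push_cast; ring
    rw [h3, Complex.exp_int_mul_two_pi_mul_I]
    simp

lemma gauss_real {b : ℝ} (co : ℝ) (hb : b < 0) :
    ∫ y : ℝ, Real.exp (b*y^2 + co*y) = Real.sqrt (π / (-b)) * Real.exp (-(co^2) / (4*b)) := by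
  have hbc : ((b:ℂ)).re < 0 := by simpa using hb
  have h := integral_cexp_quadratic hbc (co:ℂ) 0
  have hL : ∫ x : ℝ, Complex.exp ((b:ℂ)*(x:ℂ)^2 + (co:ℂ)*(x:ℂ) + 0)
      = ((∫ x : ℝ, Real.exp (b*x^2+co*x) : ℝ) : ℂ) := by
    rw [show (fun x : ℝ => Complex.exp ((b:ℂ)*(x:ℂ)^2 + (co:ℂ)*(x:ℂ) + 0))
        = fun x : ℝ => ((Real.exp (b*x^2+co*x) : ℝ) : ℂ) from funext fun x => by
      rw [show ((b:ℂ)*(x:ℂ)^2 + (co:ℂ)*(x:ℂ) + 0 : ℂ) = (((b*x^2+co*x : ℝ)):ℂ) by push_cast; ring,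
        Complex.ofReal_exp]]
    exact integral_ofReal
  have hR : ((π:ℂ) / -(b:ℂ)) ^ (1/2 : ℂ) * Complex.exp (0 - (co:ℂ)^2/(4*(b:ℂ)))
      = ((Real.sqrt (π/(-b)) * Real.exp (-(co^2)/(4*b)) : ℝ) : ℂ) := by
    have hpos : (0:ℝ) ≤ π / -b := div_nonneg Real.pi_pos.le (by linarith)
    rw [show ((π:ℂ) / -(b:ℂ)) = ((π / -b : ℝ) : ℂ) by push_cast; ring]
    rw [show (1/2 : ℂ) = ((1/2 : ℝ) : ℂ) by norm_num]
    rw [← Complex.ofReal_cpow hpos (1/2 : ℝ)]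
    rw [show ((0:ℂ) - (co:ℂ)^2/(4*(b:ℂ))) = ((-(co^2)/(4*b) : ℝ) : ℂ) by push_cast; ring]
    rw [← Complex.ofReal_exp, ← Complex.ofReal_mul]
    norm_cast
    rw [Real.sqrt_eq_rpow]
  have := hL.symm.trans (h.trans hR)
  exact_mod_cast this

lemma gauss_cplx {b : ℝ} (co : ℝ) (hb : b < 0) :
    ∫ y : ℝ, ((Real.exp (b*y^2 + co*y) : ℝ) : ℂ)
      = ((Real.sqrt (π / (-b)) * Real.exp (-(co^2) / (4*b)) : ℝ) : ℂ) := by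
  calc ∫ y : ℝ, ((Real.exp (b*y^2 + co*y) : ℝ) : ℂ)
      = ((∫ y : ℝ, Real.exp (b*y^2 + co*y) : ℝ) : ℂ) := integral_ofReal
  _ = _ := by rw [gauss_real co hb]

lemma integrable_H {b : ℝ} (co : ℝ) (hb : b < 0) :
    Integrable (fun y : ℝ => ((Real.exp (b*y^2 + co*y) : ℝ) : ℂ)) := by
  have h := integrable_cexp_quadratic' (b := (b:ℂ)) (by simpa using hb) (co:ℂ) 0
  refine h.congr (Filter.Eventually.of_forall fun y => ?_)
  show Complex.exp ((b:ℂ)*(y:ℂ)^2 + (co:ℂ)*(y:ℂ) + 0) = _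
  rw [show ((b:ℂ)*(y:ℂ)^2 + (co:ℂ)*(y:ℂ) + 0 : ℂ) = (((b*y^2+co*y : ℝ)):ℂ) by push_cast; ring]
  exact (Complex.ofReal_exp _).symm

/- ### gterm integrability and integrals -/

section main

variable {ℏ₀ s s' : ℝ} (c c' : ℤ → ℂ)

lemma hbneg (hℏ : 0 < ℏ₀) (hs : 0 < s) (hs' : 0 < s') : -((s+s')/(2*ℏ₀)) < 0 := by
  have : 0 < (s+s')/(2*ℏ₀) := by positivity
  linarith

lemma gterm_integrable (hℏ : 0 < ℏ₀) (hs : 0 < s) (hs' : 0 < s') (q : ℤ × ℤ) :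
    Integrable (gterm ℏ₀ s s' c c' q)
      ((volume.restrict (Set.Ioc 0 (2 * π))).prod volume) := by
  have hF : Integrable (fun x : ℝ =>
      gA ℏ₀ s s' c c' q * Complex.exp ((((q.2 - q.1 : ℤ) : ℝ) : ℂ) * Complex.I * (x : ℂ)))
      (volume.restrict (Set.Ioc 0 (2 * π))) := by
    apply Continuous.integrableOn_Ioc
    exact continuous_const.mul (Complex.continuous_exp.comp
      (continuous_const.mul Complex.continuous_ofReal))
  have hH : Integrable (fun y : ℝ =>
      ((Real.exp (-((s+s')/(2*ℏ₀))*y^2 + -((q.1:ℝ)*s + (q.2:ℝ)*s')*y) : ℝ) : ℂ)) volume :=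
    integrable_H _ (hbneg hℏ hs hs')
  exact hF.mul_prod hH

lemma integral_gterm (hℏ : 0 < ℏ₀) (hs : 0 < s) (hs' : 0 < s') (q : ℤ × ℤ) :
    ∫ p, gterm ℏ₀ s s' c c' q p ∂((volume.restrict (Set.Ioc 0 (2 * π))).prod volume)
      = gA ℏ₀ s s' c c' q * (if (q.2 - q.1 : ℤ) = 0 then ((2*π:ℝ):ℂ) else 0) *
        ((Real.sqrt (π / ((s+s')/(2*ℏ₀))) *
          Real.exp (-((-((q.1:ℝ)*s + (q.2:ℝ)*s'))^2) / (4*(-((s+s')/(2*ℏ₀))))) : ℝ) : ℂ) := by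
  have hb : -((s+s')/(2*ℏ₀)) < 0 := hbneg hℏ hs hs'
  rw [show gterm ℏ₀ s s' c c' q = fun p : ℝ × ℝ =>
      (fun x : ℝ => gA ℏ₀ s s' c c' q *
        Complex.exp ((((q.2 - q.1 : ℤ) : ℝ) : ℂ) * Complex.I * (x : ℂ))) p.1 *
      (fun y : ℝ =>
        ((Real.exp (-((s+s')/(2*ℏ₀))*y^2 + -((q.1:ℝ)*s + (q.2:ℝ)*s')*y) : ℝ) : ℂ)) p.2 from rfl]
  rw [MeasureTheory.integral_prod_mul (fun x : ℝ => gA ℏ₀ s s' c c' q *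
      Complex.exp ((((q.2 - q.1 : ℤ) : ℝ) : ℂ) * Complex.I * (x : ℂ)))
    (fun y : ℝ => ((Real.exp (-((s+s')/(2*ℏ₀))*y^2 + -((q.1:ℝ)*s + (q.2:ℝ)*s')*y) : ℝ) : ℂ))]
  rw [MeasureTheory.integral_const_mul, xint, gauss_cplx _ hb]
  rw [neg_neg]

lemma integral_norm_gterm (hℏ : 0 < ℏ₀) (hs : 0 < s) (hs' : 0 < s') (q : ℤ × ℤ) :
    ∫ p, ‖gterm ℏ₀ s s' c c' q p‖ ∂((volume.restrict (Set.Ioc 0 (2 * π))).prod volume)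
      = (2*π) * (‖c q.1‖ * ‖c' q.2‖ * Real.exp (-(s*ℏ₀*(q.1:ℝ)^2 + s'*ℏ₀*(q.2:ℝ)^2)/2)) *
        (Real.sqrt (π / ((s+s')/(2*ℏ₀))) *
          Real.exp (-((-((q.1:ℝ)*s + (q.2:ℝ)*s'))^2) / (4*(-((s+s')/(2*ℏ₀)))))) := by
  have hb : -((s+s')/(2*ℏ₀)) < 0 := hbneg hℏ hs hs'
  rw [show (fun p : ℝ × ℝ => ‖gterm ℏ₀ s s' c c' q p‖) = fun p : ℝ × ℝ =>
      (fun _ : ℝ => ‖c q.1‖ * ‖c' q.2‖ * Real.exp (-(s*ℏ₀*(q.1:ℝ)^2 + s'*ℏ₀*(q.2:ℝ)^2)/2)) p.1 *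
      (fun y : ℝ => Real.exp (-((s+s')/(2*ℏ₀))*y^2 + -((q.1:ℝ)*s + (q.2:ℝ)*s')*y)) p.2 from
    funext fun p => norm_gterm ℏ₀ s s' c c' q p]
  rw [MeasureTheory.integral_prod_mul
    (fun _ : ℝ => ‖c q.1‖ * ‖c' q.2‖ * Real.exp (-(s*ℏ₀*(q.1:ℝ)^2 + s'*ℏ₀*(q.2:ℝ)^2)/2))
    (fun y : ℝ => Real.exp (-((s+s')/(2*ℏ₀))*y^2 + -((q.1:ℝ)*s + (q.2:ℝ)*s')*y))]
  rw [MeasureTheory.integral_const, gauss_real _ hb]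
  rw [Measure.real, Measure.restrict_apply_univ, Real.volume_Ioc, neg_neg]
  rw [ENNReal.toReal_ofReal (by nlinarith [Real.pi_pos] : (0:ℝ) ≤ 2*π - 0)]
  simp only [smul_eq_mul]
  ring

end main

/- ### Pointwise identity -/

lemma exp_collect (u v a1 a2 a3 b1 b2 b3 g e1 e2 e3 : ℂ)
    (h : a1+a2+a3+b1+b2+b3+g = e1+e2+e3) :
    (u * Complex.exp a1 * Complex.exp a2 * Complex.exp a3) *
      (v * Complex.exp b1 * Complex.exp b2 * Complex.exp b3) * Complex.exp g
    = u * v * Complex.exp e1 * Complex.exp e2 * Complex.exp e3 := by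
  have h1 : (u * Complex.exp a1 * Complex.exp a2 * Complex.exp a3) *
      (v * Complex.exp b1 * Complex.exp b2 * Complex.exp b3) * Complex.exp g
      = u * v * Complex.exp (a1+a2+a3+b1+b2+b3+g) := by
    rw [Complex.exp_add, Complex.exp_add, Complex.exp_add, Complex.exp_add, Complex.exp_add,
      Complex.exp_add]
    ring
  have h2 : u * v * Complex.exp e1 * Complex.exp e2 * Complex.exp e3
      = u * v * Complex.exp (e1+e2+e3) := by
    rw [Complex.exp_add, Complex.exp_add]
    ring
  rw [h1, h2, h]

lemma exp_collect_real (w w' A1 A2 A3 E2 Ey : ℝ) (h : A1 + A2 + A3 = E2 + Ey) :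
    (w * Real.exp A1) * (w' * Real.exp A2) * Real.exp A3
      = (w * w' * Real.exp E2) * Real.exp Ey := by
  calc (w * Real.exp A1) * (w' * Real.exp A2) * Real.exp A3
      = w * w' * Real.exp (A1+A2+A3) := by rw [Real.exp_add, Real.exp_add]; ring
  _ = w * w' * Real.exp (E2+Ey) := by rw [h]
  _ = (w * w' * Real.exp E2) * Real.exp Ey := by rw [Real.exp_add]; ring

lemma norm_phi_term (t ℏ₀ : ℝ) (ck : ℂ) (k : ℤ) (x y : ℝ) :
    ‖ck * Complex.exp (-((t:ℂ)*(ℏ₀:ℂ)*(k:ℂ)^2)/2) * Complex.exp ((k:ℂ)*Complex.I*(x:ℂ)) *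
      Complex.exp (-((k:ℂ)*(t:ℂ)*(y:ℂ)))‖
    = ‖ck‖ * Real.exp (-(t*ℏ₀*(k:ℝ)^2)/2 + -((k:ℝ)*t*y)) := by
  rw [norm_mul, norm_mul, norm_mul]
  rw [show (-((t:ℂ)*(ℏ₀:ℂ)*(k:ℂ)^2)/2 : ℂ) = ((-(t*ℏ₀*(k:ℝ)^2)/2 : ℝ) : ℂ) by push_cast; ring,
    norm_cexp_ofReal,
    show ((k:ℂ)*Complex.I*(x:ℂ) : ℂ) = (((k:ℝ):ℂ))*Complex.I*((x:ℝ):ℂ) by push_cast; rfl,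
    norm_cexp_I,
    show (-((k:ℂ)*(t:ℂ)*(y:ℂ)) : ℂ) = ((-((k:ℝ)*t*y) : ℝ) : ℂ) by push_cast; ring,
    norm_cexp_ofReal]
  rw [mul_one, mul_assoc, ← Real.exp_add]

section main2

variable {ℏ₀ s s' : ℝ} (c c' : ℤ → ℂ)

lemma integrand_eq (hℏ : 0 < ℏ₀) (hs : 0 < s) (hs' : 0 < s')
    (hc : Summable fun k : ℤ => ‖c k‖^2) (hc' : Summable fun k : ℤ => ‖c' k‖^2) (p : ℝ × ℝ) :
    (starRingEnd ℂ) (Phi ℏ₀ s c p.1 p.2) * Phi ℏ₀ s' c' p.1 p.2 *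
      ((Real.exp (-((s + s') * p.2 ^ 2) / (2 * ℏ₀)) : ℝ) : ℂ)
    = ∑' q : ℤ × ℤ, gterm ℏ₀ s s' c c' q p := by
  set x := p.1 with hx
  set y := p.2 with hy
  set f : ℤ → ℂ := fun k => c k * Complex.exp (-((s:ℂ)*(ℏ₀:ℂ)*(k:ℂ)^2)/2) *
    Complex.exp ((k:ℂ)*Complex.I*(x:ℂ)) * Complex.exp (-((k:ℂ)*(s:ℂ)*(y:ℂ))) with hfdef
  set f' : ℤ → ℂ := fun k => c' k * Complex.exp (-((s':ℂ)*(ℏ₀:ℂ)*(k:ℂ)^2)/2) *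
    Complex.exp ((k:ℂ)*Complex.I*(x:ℂ)) * Complex.exp (-((k:ℂ)*(s':ℂ)*(y:ℂ))) with hf'def
  have h1 : Summable fun k => ‖f k‖ := by
    simp only [hfdef, norm_phi_term]
    exact summable_norm_mul hs hℏ c hc y
  have h2 : Summable fun k => ‖f' k‖ := by
    simp only [hf'def, norm_phi_term]
    exact summable_norm_mul hs' hℏ c' hc' y
  have h1c : Summable fun k => ‖(starRingEnd ℂ) (f k)‖ := by
    simpa only [RCLike.norm_conj] using h1
  have hPhi : Phi ℏ₀ s c x y = ∑' k, f k := rfl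
  have hPhi' : Phi ℏ₀ s' c' x y = ∑' k, f' k := rfl
  have hconj : (starRingEnd ℂ) (Phi ℏ₀ s c x y) = ∑' k, (starRingEnd ℂ) (f k) := by
    rw [hPhi]
    exact ((h1.of_norm).hasSum.map (starRingEnd ℂ) RCLike.continuous_conj).tsum_eq.symm
  rw [hconj, hPhi']
  rw [tsum_mul_tsum_of_summable_norm h1c h2]
  rw [← tsum_mul_right]
  refine tsum_congr fun q => ?_
  rw [hfdef, hf'def, gterm, gA, ← hx, ← hy]
  simp only [map_mul, ← Complex.exp_conj, map_neg, map_div₀, map_pow, Complex.conj_ofReal,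
    map_intCast, Complex.conj_I, map_ofNat, Complex.ofReal_exp]
  exact exp_collect _ _ _ _ _ _ _ _ _ _ _ _ (by push_cast; ring)

lemma hpt_all (hℏ : 0 < ℏ₀) (hs : 0 < s) (hs' : 0 < s')
    (hc : Summable fun k : ℤ => ‖c k‖^2) (hc' : Summable fun k : ℤ => ‖c' k‖^2) (p : ℝ × ℝ) :
    Summable fun q : ℤ × ℤ => ‖gterm ℏ₀ s s' c c' q p‖ := by
  have hu := summable_norm_mul hs hℏ c hc p.2
  have hv := summable_norm_mul hs' hℏ c' hc' p.2
  have hprod := hu.mul_of_nonneg hv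
    (fun k => mul_nonneg (norm_nonneg _) (Real.exp_pos _).le)
    (fun k => mul_nonneg (norm_nonneg _) (Real.exp_pos _).le)
  refine (hprod.mul_right (Real.exp (-((s+s')/(2*ℏ₀)) * p.2^2))).congr fun q => ?_
  rw [norm_gterm]
  exact exp_collect_real _ _ _ _ _ _ _ (by ring)

lemma summable_int_norm (hℏ : 0 < ℏ₀) (hs : 0 < s) (hs' : 0 < s')
    (hc : Summable fun k : ℤ => ‖c k‖^2) (hc' : Summable fun k : ℤ => ‖c' k‖^2) :
    Summable fun q : ℤ × ℤ =>
      ∫ p, ‖gterm ℏ₀ s s' c c' q p‖ ∂((volume.restrict (Set.Ioc 0 (2 * π))).prod volume) := by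
  have hne : s + s' ≠ 0 := by positivity
  have hℏne : ℏ₀ ≠ 0 := ne_of_gt hℏ
  have hα : 0 < ℏ₀*s*s'/(2*(s+s')) := by positivity
  have hexp : ∀ q : ℤ × ℤ,
      Real.exp (-(s*ℏ₀*(q.1:ℝ)^2 + s'*ℏ₀*(q.2:ℝ)^2)/2) *
        Real.exp (-((-((q.1:ℝ)*s + (q.2:ℝ)*s'))^2) / (4*(-((s+s')/(2*ℏ₀)))))
      = Real.exp (-(ℏ₀*s*s'/(2*(s+s')) * ((q.1:ℝ) - (q.2:ℝ))^2)) := by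
    intro q
    rw [← Real.exp_add]
    congr 1
    have hne2 : (4*(-((s+s')/(2*ℏ₀)))) ≠ 0 := by
      have : 0 < (s+s')/(2*ℏ₀) := by positivity
      intro hcon
      nlinarith
    rw [div_add_div _ _ (two_ne_zero) hne2]
    rw [div_eq_iff (mul_ne_zero two_ne_zero hne2)]
    field_simp
    ring
  have hS := (summable_2d (w := fun k => ‖c k‖) (w' := fun k => ‖c' k‖) hc hc'
    (fun k => norm_nonneg _) (fun k => norm_nonneg _) hα).mul_left
    ((2*π) * Real.sqrt (π / ((s+s')/(2*ℏ₀))))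
  refine hS.congr fun q => ?_
  rw [integral_norm_gterm c c' hℏ hs hs' q, ← hexp q]
  ring

end main2

/-- Theorem 3.5 in the abelian case `K = U(1)`:
`⟨σ_s, σ'_{s'}⟩^{BKS} = a_{(s+s')/2} ⟨f, f'⟩_{L²(K)}`, with `a_t = (πℏ₀)^{1/2}` since `ρ = 0`. -/
theorem statement_3 {ℏ₀ s s' : ℝ} (hℏ : 0 < ℏ₀) (hs : 0 < s) (hs' : 0 < s')
    (c c' : ℤ → ℂ)
    (hc : Summable fun k : ℤ => ‖c k‖ ^ 2) (hc' : Summable fun k : ℤ => ‖c' k‖ ^ 2) :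
    Integrable
      (fun p : ℝ × ℝ =>
        (starRingEnd ℂ) (Phi ℏ₀ s c p.1 p.2) * Phi ℏ₀ s' c' p.1 p.2 *
          (Real.exp (-((s + s') * p.2 ^ 2) / (2 * ℏ₀)) : ℂ))
      ((volume.restrict (Set.Ioc 0 (2 * π))).prod volume) ∧
    (Real.sqrt ((s + s') / 2) : ℂ) *
        ∫ y : ℝ, (∫ x in Set.Ioc (0 : ℝ) (2 * π),
          (starRingEnd ℂ) (Phi ℏ₀ s c x y) * Phi ℏ₀ s' c' x y *
            (Real.exp (-((s + s') * y ^ 2) / (2 * ℏ₀)) : ℂ)) / (2 * (π : ℂ)) =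
      (Real.sqrt (π * ℏ₀) : ℂ) * ∑' k : ℤ, (starRingEnd ℂ) (c k) * c' k := by
  have hne : s + s' ≠ 0 := by positivity
  have hℏne : ℏ₀ ≠ 0 := ne_of_gt hℏ
  have hptw : ∀ p : ℝ × ℝ, Summable fun q : ℤ × ℤ => ‖gterm ℏ₀ s s' c c' q p‖ :=
    hpt_all c c' hℏ hs hs' hc hc'
  have hIntEach : ∀ q : ℤ × ℤ, Integrable (gterm ℏ₀ s s' c c' q)
      ((volume.restrict (Set.Ioc 0 (2 * π))).prod volume) :=
    gterm_integrable c c' hℏ hs hs'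
  have hSumInt := summable_int_norm c c' hℏ hs hs' hc hc'
  have heq : (fun p : ℝ × ℝ =>
      (starRingEnd ℂ) (Phi ℏ₀ s c p.1 p.2) * Phi ℏ₀ s' c' p.1 p.2 *
        (Real.exp (-((s + s') * p.2 ^ 2) / (2 * ℏ₀)) : ℂ))
      = fun p => ∑' q : ℤ × ℤ, gterm ℏ₀ s s' c c' q p :=
    funext fun p => integrand_eq c c' hℏ hs hs' hc hc' p
  have hInt : Integrable
      (fun p : ℝ × ℝ =>
        (starRingEnd ℂ) (Phi ℏ₀ s c p.1 p.2) * Phi ℏ₀ s' c' p.1 p.2 *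
          (Real.exp (-((s + s') * p.2 ^ 2) / (2 * ℏ₀)) : ℂ))
      ((volume.restrict (Set.Ioc 0 (2 * π))).prod volume) := by
    rw [heq]
    exact integrable_tsum_of_summable hIntEach hptw hSumInt
  refine ⟨hInt, ?_⟩
  -- Step 1: reduce to the double integral over the product measure
  have hunc : Integrable (Function.uncurry fun x y : ℝ =>
      (starRingEnd ℂ) (Phi ℏ₀ s c x y) * Phi ℏ₀ s' c' x y *
        (Real.exp (-((s + s') * y ^ 2) / (2 * ℏ₀)) : ℂ))
      ((volume.restrict (Set.Ioc 0 (2 * π))).prod volume) := hInt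
  have hswap := MeasureTheory.integral_integral_swap (f := fun x y : ℝ =>
      (starRingEnd ℂ) (Phi ℏ₀ s c x y) * Phi ℏ₀ s' c' x y *
        (Real.exp (-((s + s') * y ^ 2) / (2 * ℏ₀)) : ℂ)) hunc
  have hii := MeasureTheory.integral_integral (f := fun x y : ℝ =>
      (starRingEnd ℂ) (Phi ℏ₀ s c x y) * Phi ℏ₀ s' c' x y *
        (Real.exp (-((s + s') * y ^ 2) / (2 * ℏ₀)) : ℂ)) hunc
  have hprodval : ∫ z : ℝ × ℝ, (fun x y : ℝ =>
      (starRingEnd ℂ) (Phi ℏ₀ s c x y) * Phi ℏ₀ s' c' x y *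
        (Real.exp (-((s + s') * y ^ 2) / (2 * ℏ₀)) : ℂ)) z.1 z.2
      ∂((volume.restrict (Set.Ioc 0 (2 * π))).prod volume)
      = ∑' q : ℤ × ℤ, ∫ p, gterm ℏ₀ s s' c c' q p
          ∂((volume.restrict (Set.Ioc 0 (2 * π))).prod volume) := by
    have h0 : (fun z : ℝ × ℝ => (fun x y : ℝ =>
        (starRingEnd ℂ) (Phi ℏ₀ s c x y) * Phi ℏ₀ s' c' x y *
          (Real.exp (-((s + s') * y ^ 2) / (2 * ℏ₀)) : ℂ)) z.1 z.2)
        = fun p => ∑' q : ℤ × ℤ, gterm ℏ₀ s s' c c' q p := heq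
    rw [h0]
    exact (integral_tsum_of_summable_integral_norm hIntEach hSumInt).symm
  have hyx : (∫ y : ℝ, ∫ x in Set.Ioc (0 : ℝ) (2 * π),
      (starRingEnd ℂ) (Phi ℏ₀ s c x y) * Phi ℏ₀ s' c' x y *
        (Real.exp (-((s + s') * y ^ 2) / (2 * ℏ₀)) : ℂ))
      = ∑' q : ℤ × ℤ, ∫ p, gterm ℏ₀ s s' c c' q p
          ∂((volume.restrict (Set.Ioc 0 (2 * π))).prod volume) := by
    rw [← hswap, hii]
    exact hprodval
  -- Step 2: compute the sum of integrals
  have hdiagsum : (∑' q : ℤ × ℤ, ∫ p, gterm ℏ₀ s s' c c' q p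
      ∂((volume.restrict (Set.Ioc 0 (2 * π))).prod volume))
      = ((2*π:ℝ):ℂ) * ((Real.sqrt (π/((s+s')/(2*ℏ₀))) : ℝ):ℂ) *
        ∑' k : ℤ, (starRingEnd ℂ) (c k) * c' k := by
    rw [tsum_congr (fun q => integral_gterm c c' hℏ hs hs' q)]
    have hInj : Function.Injective (fun k : ℤ => ((k, k) : ℤ × ℤ)) := by
      intro a b h
      simpa using congrArg Prod.fst h
    have hSupp : Function.support (fun q : ℤ × ℤ =>
        gA ℏ₀ s s' c c' q * (if (q.2 - q.1 : ℤ) = 0 then ((2*π:ℝ):ℂ) else 0) *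
          ((Real.sqrt (π / ((s+s')/(2*ℏ₀))) *
            Real.exp (-((-((q.1:ℝ)*s + (q.2:ℝ)*s'))^2) / (4*(-((s+s')/(2*ℏ₀)))))
            : ℝ) : ℂ)) ⊆ Set.range (fun k : ℤ => ((k, k) : ℤ × ℤ)) := by
      intro q hq
      by_contra hr
      apply hq
      have h0 : ¬ (q.2 - q.1 = 0) := by
        intro h0
        exact hr ⟨q.1, (Prod.ext_iff).mpr ⟨rfl, (sub_eq_zero.mp h0).symm⟩⟩
      simp only [if_neg h0, mul_zero, zero_mul]
    rw [← Function.Injective.tsum_eq hInj hSupp]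
    have hkk : ∀ k : ℤ, gA ℏ₀ s s' c c' (k, k) *
        (if (((k,k) : ℤ×ℤ).2 - ((k,k) : ℤ×ℤ).1 : ℤ) = 0 then ((2*π:ℝ):ℂ) else 0) *
        ((Real.sqrt (π / ((s+s')/(2*ℏ₀))) *
          Real.exp (-((-((((k,k):ℤ×ℤ).1:ℝ)*s + (((k,k):ℤ×ℤ).2:ℝ)*s'))^2) /
            (4*(-((s+s')/(2*ℏ₀))))) : ℝ) : ℂ)
        = ((2*π:ℝ):ℂ) * ((Real.sqrt (π/((s+s')/(2*ℏ₀))) : ℝ):ℂ) *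
          ((starRingEnd ℂ) (c k) * c' k) := by
      intro k
      have hone : ((Real.exp (-(s*ℏ₀*(k:ℝ)^2 + s'*ℏ₀*(k:ℝ)^2)/2) : ℝ):ℂ) *
          ((Real.exp (-((-((k:ℝ)*s + (k:ℝ)*s'))^2) / (4*(-((s+s')/(2*ℏ₀))))) : ℝ):ℂ) = 1 := by
        rw [← Complex.ofReal_mul, ← Real.exp_add]
        have hz : -(s*ℏ₀*(k:ℝ)^2 + s'*ℏ₀*(k:ℝ)^2)/2 +
            -((-((k:ℝ)*s + (k:ℝ)*s'))^2) / (4*(-((s+s')/(2*ℏ₀)))) = 0 := by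
          have hne2 : (4*(-((s+s')/(2*ℏ₀)))) ≠ 0 := by
            have : 0 < (s+s')/(2*ℏ₀) := by positivity
            intro hcon
            nlinarith
          rw [div_add_div _ _ (two_ne_zero) hne2]
          rw [div_eq_iff (mul_ne_zero two_ne_zero hne2)]
          field_simp
          ring
        rw [hz, Real.exp_zero, Complex.ofReal_one]
      simp only [show ((k,k) : ℤ×ℤ).1 = k from rfl, show ((k,k) : ℤ×ℤ).2 = k from rfl,
        sub_self, reduceIte]
      rw [gA]
      simp only [show ((k,k) : ℤ×ℤ).1 = k from rfl, show ((k,k) : ℤ×ℤ).2 = k from rfl]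
      push_cast
      push_cast at hone
      linear_combination (2*(π:ℂ) * ((Real.sqrt (π/((s+s')/(2*ℏ₀))) : ℝ):ℂ) *
        ((starRingEnd ℂ) (c k) * c' k)) * hone
    rw [tsum_congr hkk, tsum_mul_left]
  -- Step 3: final arithmetic
  rw [integral_div, hyx, hdiagsum]
  have h2pi : (2*(π:ℂ)) ≠ 0 := by
    have : (2*π:ℝ) ≠ 0 := by positivity
    exact_mod_cast this
  have hsqrt : Real.sqrt ((s+s')/2) * Real.sqrt (π/((s+s')/(2*ℏ₀))) = Real.sqrt (π*ℏ₀) := by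
    rw [← Real.sqrt_mul (by positivity)]
    congr 1
    field_simp
  have hs2 : ((Real.sqrt ((s+s')/2) : ℝ):ℂ) * ((Real.sqrt (π/((s+s')/(2*ℏ₀))) : ℝ):ℂ)
      = ((Real.sqrt (π*ℏ₀) : ℝ):ℂ) := by
    rw [← Complex.ofReal_mul, hsqrt]
  rw [show ((2*π:ℝ):ℂ) = 2*(π:ℂ) by push_cast; ring]
  rw [show 2*(π:ℂ) * ((Real.sqrt (π/((s+s')/(2*ℏ₀))) : ℝ):ℂ) *
      (∑' k : ℤ, (starRingEnd ℂ) (c k) * c' k) / (2*(π:ℂ))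
      = ((Real.sqrt (π/((s+s')/(2*ℏ₀))) : ℝ):ℂ) *
        (∑' k : ℤ, (starRingEnd ℂ) (c k) * c' k) from by
    rw [show 2*(π:ℂ) * ((Real.sqrt (π/((s+s')/(2*ℏ₀))) : ℝ):ℂ) *
        (∑' k : ℤ, (starRingEnd ℂ) (c k) * c' k)
        = (2*(π:ℂ)) * (((Real.sqrt (π/((s+s')/(2*ℏ₀))) : ℝ):ℂ) *
          (∑' k : ℤ, (starRingEnd ℂ) (c k) * c' k)) by ring]
    exact mul_div_cancel_left₀ _ h2pi]
  rw [← mul_assoc, hs2]
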